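/- For every n ≥ 1, the iterated commutator subgroups [D,ₙG₁], [L₁,ₙG₁] and [L₂,ₙG₂] are normal subgroups of the weak commutativity group χ(G). -/

import Mathlib

open Subgroup
open scoped commutatorElement

/-- The weak commutativity relations inside the free product `G ∗ G`. -/
def chiRel (G : Type*) [Group G] : Subgroup (Monoid.Coprod G G) :=
  Subgroup.normalClosure
    {x | ∃ g : G, x = Monoid.Coprod.inl g * Monoid.Coprod.inr g *
      (Monoid.Coprod.inl g)⁻¹ * (Monoid.Coprod.inr g)⁻¹}

instance chiRel_normal (G : Type*) [Group G] : (chiRel G).Normal :=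
  Subgroup.normalClosure_normal

/-- The weak commutativity group `χ(G)`. -/
def Chi (G : Type*) [Group G] : Type _ := Monoid.Coprod G G ⧸ chiRel G

instance (G : Type*) [Group G] : Group (Chi G) :=
  inferInstanceAs (Group (Monoid.Coprod G G ⧸ chiRel G))

/-- The canonical map `G → χ(G)`, `g ↦ g`. -/
def chiIota1 (G : Type*) [Group G] : G →* Chi G :=
  (QuotientGroup.mk' (chiRel G)).comp Monoid.Coprod.inl

/-- The canonical map `G → χ(G)`, `g ↦ g^φ`. -/
def chiIota2 (G : Type*) [Group G] : G →* Chi G :=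
  (QuotientGroup.mk' (chiRel G)).comp Monoid.Coprod.inr

/-- `G₁ ≤ χ(G)`. -/
def chiG1 (G : Type*) [Group G] : Subgroup (Chi G) := (chiIota1 G).range

/-- `G₂ = G^φ ≤ χ(G)`. -/
def chiG2 (G : Type*) [Group G] : Subgroup (Chi G) := (chiIota2 G).range

/-- `L = ⟨g⁻¹ g^φ : g ∈ G⟩`. -/
def chiL (G : Type*) [Group G] : Subgroup (Chi G) :=
  Subgroup.closure {x | ∃ g : G, x = (chiIota1 G g)⁻¹ * chiIota2 G g}

/-- `D = ⁅G₁, G₂⁆`. -/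
def chiD (G : Type*) [Group G] : Subgroup (Chi G) := ⁅chiG1 G, chiG2 G⁆

/-- `L₁ = ⁅L, G₁⁆`. -/
def chiL1 (G : Type*) [Group G] : Subgroup (Chi G) := ⁅chiL G, chiG1 G⁆

/-- `L₂ = ⁅L, G₂⁆`. -/
def chiL2 (G : Type*) [Group G] : Subgroup (Chi G) := ⁅chiL G, chiG2 G⁆

/-- `R = ⁅⁅G₁, L⁆, G₂⁆`. -/
def chiR (G : Type*) [Group G] : Subgroup (Chi G) := ⁅⁅chiG1 G, chiL G⁆, chiG2 G⁆

/-- `L₁₂ = ⁅L₁, L₂⁆`. -/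
def chiL12 (G : Type*) [Group G] : Subgroup (Chi G) := ⁅chiL1 G, chiL2 G⁆
/-- Iterated commutator subgroup: `[A,₀B] = A`, `[A,ₙ₊₁B] = ⁅[A,ₙB], B⁆`. -/
def iterComm {H : Type*} [Group H] (A B : Subgroup H) : ℕ → Subgroup H
  | 0 => A
  | n + 1 => ⁅iterComm A B n, B⁆

section AuxIdent

variable {H : Type*} [Group H]

/-- math-convention commutator `x⁻¹y⁻¹xy`. -/
def wcm (x y : H) : H := x⁻¹ * y⁻¹ * x * y

/-- right conjugation `c⁻¹xc`. -/
def wcj (x c : H) : H := c⁻¹ * x * c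

theorem wcm_mul_left (x p z : H) : wcm (x * p) z = wcj (wcm x z) p * wcm p z := by
  unfold wcm wcj; group

theorem wcm_mul_right (x y z : H) : wcm x (y * z) = wcm x z * wcj (wcm x y) z := by
  unfold wcm wcj; group

theorem wcj_wcj (x c d : H) : wcj (wcj x c) d = wcj x (c * d) := by
  unfold wcj; group

theorem wcj_mul (u v c : H) : wcj (u * v) c = wcj u c * wcj v c := by
  unfold wcj; group

theorem wcj_one (x : H) : wcj x 1 = x := by unfold wcj; group

theorem wcj_one_left (c : H) : wcj (1 : H) c = 1 := by unfold wcj; group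

theorem wcm_inv (x y : H) : (wcm x y)⁻¹ = wcm y x := by unfold wcm; group

theorem wcj_inv (x c : H) : (wcj x c)⁻¹ = wcj x⁻¹ c := by unfold wcj; group

theorem wcm_eq_one {x y : H} (h : Commute x y) : wcm x y = 1 := by
  unfold wcm
  rw [h.inv_inv.eq]; group

end AuxIdent

section ChiBasic

variable (G : Type*) [Group G]

theorem chi_comm (g : G) : Commute (chiIota1 G g) (chiIota2 G g) := by
  rw [← commutatorElement_eq_one_iff_commute]
  have h1 : ⁅chiIota1 G g, chiIota2 G g⁆
      = QuotientGroup.mk' (chiRel G)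
        ⁅(Monoid.Coprod.inl g : Monoid.Coprod G G), (Monoid.Coprod.inr g : Monoid.Coprod G G)⁆ := by
    rw [map_commutatorElement (QuotientGroup.mk' (chiRel G))
      (Monoid.Coprod.inl g : Monoid.Coprod G G) (Monoid.Coprod.inr g : Monoid.Coprod G G)]
    rfl
  rw [h1, QuotientGroup.mk'_apply]
  exact (QuotientGroup.eq_one_iff _).mpr (Subgroup.subset_normalClosure ⟨g, rfl⟩)

theorem mem_chiG1 (g : G) : chiIota1 G g ∈ chiG1 G := ⟨g, rfl⟩

theorem mem_chiG2 (g : G) : chiIota2 G g ∈ chiG2 G := ⟨g, rfl⟩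

theorem mem_chiG1_iff {p : Chi G} : p ∈ chiG1 G ↔ ∃ g, chiIota1 G g = p := Iff.rfl

theorem mem_chiG2_iff {p : Chi G} : p ∈ chiG2 G ↔ ∃ g, chiIota2 G g = p := Iff.rfl

theorem mem_chiL (g : G) : (chiIota1 G g)⁻¹ * chiIota2 G g ∈ chiL G :=
  Subgroup.subset_closure ⟨g, rfl⟩

theorem g1_sup_g2 : chiG1 G ⊔ chiG2 G = (⊤ : Subgroup (Chi G)) := by
  have h1 : (QuotientGroup.mk' (chiRel G)).range = ⊤ :=
    MonoidHom.range_eq_top.mpr (QuotientGroup.mk'_surjective _)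
  have h2 := Monoid.Coprod.range_eq (QuotientGroup.mk' (chiRel G))
  rw [h1] at h2
  exact h2.symm

theorem normal_of_conj (X : Subgroup (Chi G))
    (h1 : ∀ g : G, ∀ x ∈ X, chiIota1 G g * x * (chiIota1 G g)⁻¹ ∈ X)
    (h2 : ∀ g : G, ∀ x ∈ X, chiIota2 G g * x * (chiIota2 G g)⁻¹ ∈ X) : X.Normal := by
  rw [← Subgroup.normalizer_eq_top_iff, eq_top_iff, ← g1_sup_g2]
  apply sup_le
  · rintro p ⟨g, rfl⟩
    rw [Subgroup.mem_normalizer_iff]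
    intro x
    constructor
    · exact h1 g x
    · intro hx
      have h' := h1 g⁻¹ _ hx
      rw [map_inv] at h'
      have e : (chiIota1 G g)⁻¹ * (chiIota1 G g * x * (chiIota1 G g)⁻¹) * ((chiIota1 G g)⁻¹)⁻¹
          = x := by group
      rwa [e] at h'
  · rintro p ⟨g, rfl⟩
    rw [Subgroup.mem_normalizer_iff]
    intro x
    constructor
    · exact h2 g x
    · intro hx
      have h' := h2 g⁻¹ _ hx
      rw [map_inv] at h'
      have e : (chiIota2 G g)⁻¹ * (chiIota2 G g * x * (chiIota2 G g)⁻¹) * ((chiIota2 G g)⁻¹)⁻¹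
          = x := by group
      rwa [e] at h'

theorem conj_mem_commutator_of (M N : Subgroup (Chi G)) (c : Chi G)
    (h : ∀ p ∈ M, ∀ q ∈ N, c * ⁅p, q⁆ * c⁻¹ ∈ ⁅M, N⁆) :
    ∀ x ∈ ⁅M, N⁆, c * x * c⁻¹ ∈ ⁅M, N⁆ := by
  intro x hx
  have hle : ⁅M, N⁆ ≤ Subgroup.comap (MulAut.conj c).toMonoidHom ⁅M, N⁆ := by
    apply Subgroup.commutator_le.mpr
    intro p hp q hq
    rw [Subgroup.mem_comap]
    have e : (MulAut.conj c).toMonoidHom ⁅p, q⁆ = c * ⁅p, q⁆ * c⁻¹ := rfl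
    rw [e]
    exact h p hp q hq
  have h2 := hle hx
  rw [Subgroup.mem_comap] at h2
  have e : (MulAut.conj c).toMonoidHom x = c * x * c⁻¹ := rfl
  rwa [e] at h2

end ChiBasic

section Sidki

variable (G : Type*) [Group G]

theorem chi_rel3 (g h : G) :
    wcm (chiIota1 G g * chiIota1 G h) (chiIota2 G g * chiIota2 G h) = 1 := by
  have := wcm_eq_one (chi_comm G (g * h))
  rwa [map_mul, map_mul] at this

theorem sidki_A2 (g h : G) :
    wcj (wcm (chiIota1 G g) (chiIota2 G h)) (chiIota1 G h)
      = wcj (wcm (chiIota2 G g) (chiIota1 G h)) (chiIota2 G h) := by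
  have r1 : wcm (chiIota1 G g) (chiIota2 G g) = 1 := wcm_eq_one (chi_comm G g)
  have r2 : wcm (chiIota1 G h) (chiIota2 G h) = 1 := wcm_eq_one (chi_comm G h)
  have r3 := chi_rel3 G g h
  rw [wcm_mul_left, wcm_mul_right, r1, wcj_one_left, mul_one,
    wcm_mul_right, r2, one_mul] at r3
  have h0 := mul_eq_one_iff_eq_inv.mp r3
  rw [wcj_inv, wcm_inv] at h0
  exact h0

theorem sidki_C (g h k : G) :
    wcj (wcm (chiIota1 G g) (chiIota2 G h)) (chiIota1 G k * chiIota1 G h)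
      = wcj (wcm (chiIota2 G g) (chiIota1 G h)) (chiIota2 G k * chiIota2 G h) := by
  have h1 := sidki_A2 G (g * k) h
  rw [map_mul, map_mul, wcm_mul_left, wcm_mul_left, wcj_mul, wcj_mul,
    wcj_wcj, wcj_wcj, sidki_A2 G k h] at h1
  exact mul_right_cancel h1

theorem sidki_eq (g h : G) :
    wcm (chiIota1 G g) (chiIota2 G h) = wcm (chiIota2 G g) (chiIota1 G h) := by
  have h1 := sidki_C G g h h⁻¹
  rw [map_inv, map_inv, inv_mul_cancel, inv_mul_cancel, wcj_one, wcj_one] at h1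
  exact h1

theorem sidki_conj (g h k : G) :
    wcj (wcm (chiIota1 G g) (chiIota2 G h)) (chiIota1 G k)
      = wcj (wcm (chiIota1 G g) (chiIota2 G h)) (chiIota2 G k) := by
  have e1 := wcm_mul_right (chiIota2 G g) (chiIota1 G h) (chiIota1 G k)
  have e2 := wcm_mul_right (chiIota1 G g) (chiIota2 G h) (chiIota2 G k)
  rw [← map_mul] at e1 e2
  rw [← sidki_eq G g k, ← sidki_eq G g (h * k), ← sidki_eq G g h] at e1
  exact mul_left_cancel (e1.symm.trans e2)

theorem sidki_commute (g h k : G) :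
    Commute (wcm (chiIota1 G g) (chiIota2 G h)) ((chiIota1 G k)⁻¹ * chiIota2 G k) := by
  have e := sidki_conj G g h k⁻¹
  rw [map_inv, map_inv] at e
  unfold wcj at e
  simp only [inv_inv] at e
  show wcm (chiIota1 G g) (chiIota2 G h) * ((chiIota1 G k)⁻¹ * chiIota2 G k)
    = ((chiIota1 G k)⁻¹ * chiIota2 G k) * wcm (chiIota1 G g) (chiIota2 G h)
  calc wcm (chiIota1 G g) (chiIota2 G h) * ((chiIota1 G k)⁻¹ * chiIota2 G k)
      = (chiIota1 G k)⁻¹ * (chiIota1 G k * wcm (chiIota1 G g) (chiIota2 G h) *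
          (chiIota1 G k)⁻¹) * chiIota2 G k := by group
    _ = (chiIota1 G k)⁻¹ * (chiIota2 G k * wcm (chiIota1 G g) (chiIota2 G h) *
          (chiIota2 G k)⁻¹) * chiIota2 G k := by rw [e]
    _ = ((chiIota1 G k)⁻¹ * chiIota2 G k) * wcm (chiIota1 G g) (chiIota2 G h) := by group

theorem dl_commute : ∀ x ∈ chiD G, ∀ y ∈ chiL G, Commute x y := by
  have key : ∀ g h : G, ∀ y ∈ chiL G, Commute ⁅chiIota1 G g, chiIota2 G h⁆ y := by
    intro g h y hy
    have hLc : chiL G ≤ Subgroup.centralizer {⁅chiIota1 G g, chiIota2 G h⁆} := by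
      show Subgroup.closure {x | ∃ g' : G, x = (chiIota1 G g')⁻¹ * chiIota2 G g'}
        ≤ Subgroup.centralizer {⁅chiIota1 G g, chiIota2 G h⁆}
      refine (Subgroup.closure_le _).mpr ?_
      rintro z ⟨k, rfl⟩
      rw [SetLike.mem_coe, Subgroup.mem_centralizer_iff]
      rintro w rfl
      have hc : Commute ⁅chiIota1 G g, chiIota2 G h⁆ ((chiIota1 G k)⁻¹ * chiIota2 G k) := by
        have h1 := sidki_commute G g⁻¹ h⁻¹ k
        have hid : wcm (chiIota1 G g⁻¹) (chiIota2 G h⁻¹) = ⁅chiIota1 G g, chiIota2 G h⁆ := by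
          rw [map_inv, map_inv]
          unfold wcm
          rw [commutatorElement_def]
          group
        rwa [hid] at h1
      exact hc.eq
    exact Subgroup.mem_centralizer_iff.mp (hLc hy) _ rfl
  intro x hx y hy
  have hD : chiD G ≤ Subgroup.centralizer {y} := by
    apply Subgroup.commutator_le.mpr
    rintro p ⟨g, rfl⟩ q ⟨h, rfl⟩
    rw [Subgroup.mem_centralizer_iff]
    intro w hw
    have hww : w = y := hw
    rw [hww]
    exact ((key g h y hy).symm).eq
  exact (Subgroup.mem_centralizer_iff.mp (hD hx) y rfl).symm

end Sidki

section Steps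

variable (G : Type*) [Group G]

theorem chiD_normal : (chiD G).Normal := by
  apply normal_of_conj
  · intro k
    apply conj_mem_commutator_of
    intro p hp q hq
    have e : chiIota1 G k * ⁅p, q⁆ * (chiIota1 G k)⁻¹
        = ⁅chiIota1 G k * p, q⁆ * ⁅chiIota1 G k, q⁆⁻¹ := by group
    rw [e]
    exact mul_mem (Subgroup.commutator_mem_commutator (mul_mem (mem_chiG1 G k) hp) hq)
      (inv_mem (Subgroup.commutator_mem_commutator (mem_chiG1 G k) hq))
  · intro k
    apply conj_mem_commutator_of
    intro p hp q hq
    have e : chiIota2 G k * ⁅p, q⁆ * (chiIota2 G k)⁻¹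
        = ⁅p, chiIota2 G k⁆⁻¹ * ⁅p, chiIota2 G k * q⁆ := by group
    rw [e]
    exact mul_mem (inv_mem (Subgroup.commutator_mem_commutator hp (mem_chiG2 G k)))
      (Subgroup.commutator_mem_commutator hp (mul_mem (mem_chiG2 G k) hq))

theorem conj_eq_of_commute {H : Type*} [Group H] {ak bk am bm : H} (h : Commute ak bk) :
    ak * (am⁻¹ * bm) * ak⁻¹ = ((am * ak⁻¹)⁻¹ * (bm * bk⁻¹)) * (ak⁻¹ * bk) := by
  calc ak * (am⁻¹ * bm) * ak⁻¹ = ak * am⁻¹ * bm * bk⁻¹ * (bk * ak⁻¹) := by group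
    _ = ak * am⁻¹ * bm * bk⁻¹ * (ak⁻¹ * bk) := by rw [h.inv_left.symm.eq]
    _ = ((am * ak⁻¹)⁻¹ * (bm * bk⁻¹)) * (ak⁻¹ * bk) := by group

theorem chiL_conj1 (k : G) : ∀ x ∈ chiL G, chiIota1 G k * x * (chiIota1 G k)⁻¹ ∈ chiL G := by
  intro x hx
  have hle : chiL G ≤ Subgroup.comap (MulAut.conj (chiIota1 G k)).toMonoidHom (chiL G) := by
    show Subgroup.closure {z | ∃ g' : G, z = (chiIota1 G g')⁻¹ * chiIota2 G g'} ≤ _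
    refine (Subgroup.closure_le _).mpr ?_
    rintro z ⟨m, rfl⟩
    rw [SetLike.mem_coe, Subgroup.mem_comap]
    have e0 : (MulAut.conj (chiIota1 G k)).toMonoidHom ((chiIota1 G m)⁻¹ * chiIota2 G m)
        = chiIota1 G k * ((chiIota1 G m)⁻¹ * chiIota2 G m) * (chiIota1 G k)⁻¹ := rfl
    rw [e0, conj_eq_of_commute (chi_comm G k)]
    have e1 : chiIota1 G m * (chiIota1 G k)⁻¹ = chiIota1 G (m * k⁻¹) := by
      rw [map_mul, map_inv]
    have e2 : chiIota2 G m * (chiIota2 G k)⁻¹ = chiIota2 G (m * k⁻¹) := by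
      rw [map_mul, map_inv]
    rw [e1, e2]
    exact mul_mem (mem_chiL G (m * k⁻¹)) (mem_chiL G k)
  have h2 := hle hx
  rw [Subgroup.mem_comap] at h2
  exact h2

theorem chiL_normal : (chiL G).Normal := by
  apply normal_of_conj _ _ (chiL_conj1 G)
  intro k x hx
  have e : chiIota2 G k * x * (chiIota2 G k)⁻¹
      = chiIota1 G k * ((((chiIota1 G k)⁻¹ * chiIota2 G k)) * x *
          (((chiIota1 G k)⁻¹ * chiIota2 G k))⁻¹) * (chiIota1 G k)⁻¹ := by group
  rw [e]
  exact chiL_conj1 G k _ (mul_mem (mul_mem (mem_chiL G k) hx) (inv_mem (mem_chiL G k)))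

theorem commSub_le (X : Subgroup (Chi G)) (hn : X.Normal) (Y : Subgroup (Chi G)) :
    ⁅X, Y⁆ ≤ X := by
  refine Subgroup.commutator_le.mpr fun p hp q hq => ?_
  have e : ⁅p, q⁆ = p * (q * p⁻¹ * q⁻¹) := by group
  rw [e]
  exact mul_mem hp (hn.conj_mem p⁻¹ (inv_mem hp) q)

theorem conjA_comm1 (X : Subgroup (Chi G)) (hn : X.Normal) (k : G) :
    ∀ x ∈ ⁅X, chiG1 G⁆, chiIota1 G k * x * (chiIota1 G k)⁻¹ ∈ ⁅X, chiG1 G⁆ := by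
  apply conj_mem_commutator_of
  intro p hp q hq
  obtain ⟨g, rfl⟩ := hq
  have e : chiIota1 G k * ⁅p, chiIota1 G g⁆ * (chiIota1 G k)⁻¹
      = ⁅chiIota1 G k * p * (chiIota1 G k)⁻¹, chiIota1 G (k * g * k⁻¹)⁆ := by
    rw [map_mul, map_mul, map_inv]
    group
  rw [e]
  exact Subgroup.commutator_mem_commutator (hn.conj_mem p hp _) (mem_chiG1 G _)

theorem conjB_comm2 (X : Subgroup (Chi G)) (hn : X.Normal) (k : G) :
    ∀ x ∈ ⁅X, chiG2 G⁆, chiIota2 G k * x * (chiIota2 G k)⁻¹ ∈ ⁅X, chiG2 G⁆ := by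
  apply conj_mem_commutator_of
  intro p hp q hq
  obtain ⟨g, rfl⟩ := hq
  have e : chiIota2 G k * ⁅p, chiIota2 G g⁆ * (chiIota2 G k)⁻¹
      = ⁅chiIota2 G k * p * (chiIota2 G k)⁻¹, chiIota2 G (k * g * k⁻¹)⁆ := by
    rw [map_mul, map_mul, map_inv]
    group
  rw [e]
  exact Subgroup.commutator_mem_commutator (hn.conj_mem p hp _) (mem_chiG2 G _)

theorem step1 (X : Subgroup (Chi G)) (hn : X.Normal)
    (hc : ∀ x ∈ X, ∀ d ∈ chiD G, Commute x d) :
    (⁅X, chiG1 G⁆).Normal ∧ ⁅X, chiG1 G⁆ ≤ X := by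
  refine ⟨?_, commSub_le G X hn _⟩
  apply normal_of_conj _ _ (conjA_comm1 G X hn)
  intro k
  apply conj_mem_commutator_of
  intro p hp q hq
  obtain ⟨g, rfl⟩ := hq
  have hp' : chiIota2 G k * p * (chiIota2 G k)⁻¹ ∈ X := hn.conj_mem p hp _
  have hδ : (chiIota1 G g)⁻¹ * chiIota2 G k * chiIota1 G g * (chiIota2 G k)⁻¹ ∈ chiD G := by
    have e : (chiIota1 G g)⁻¹ * chiIota2 G k * chiIota1 G g * (chiIota2 G k)⁻¹
        = ⁅(chiIota1 G g)⁻¹, chiIota2 G k⁆ := by group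
    rw [e]
    exact Subgroup.commutator_mem_commutator (inv_mem (mem_chiG1 G g)) (mem_chiG2 G k)
  have h1 : ⁅chiIota2 G k * p * (chiIota2 G k)⁻¹,
      (chiIota1 G g)⁻¹ * chiIota2 G k * chiIota1 G g * (chiIota2 G k)⁻¹⁆ = 1 :=
    (hc _ hp' _ hδ).commutator_eq
  have e : chiIota2 G k * ⁅p, chiIota1 G g⁆ * (chiIota2 G k)⁻¹
      = ⁅chiIota2 G k * p * (chiIota2 G k)⁻¹, chiIota1 G g⁆ *
        (chiIota1 G g * ⁅chiIota2 G k * p * (chiIota2 G k)⁻¹,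
          (chiIota1 G g)⁻¹ * chiIota2 G k * chiIota1 G g * (chiIota2 G k)⁻¹⁆ *
          (chiIota1 G g)⁻¹) := by group
  rw [e, h1, mul_one, mul_inv_cancel, mul_one]
  exact Subgroup.commutator_mem_commutator hp' (mem_chiG1 G g)

theorem step2 (X : Subgroup (Chi G)) (hn : X.Normal)
    (hc : ∀ x ∈ X, ∀ d ∈ chiD G, Commute x d) :
    (⁅X, chiG2 G⁆).Normal ∧ ⁅X, chiG2 G⁆ ≤ X := by
  refine ⟨?_, commSub_le G X hn _⟩
  refine normal_of_conj _ _ ?_ (conjB_comm2 G X hn)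
  intro k
  apply conj_mem_commutator_of
  intro p hp q hq
  obtain ⟨g, rfl⟩ := hq
  have hp' : chiIota1 G k * p * (chiIota1 G k)⁻¹ ∈ X := hn.conj_mem p hp _
  have hδ : (chiIota2 G g)⁻¹ * chiIota1 G k * chiIota2 G g * (chiIota1 G k)⁻¹ ∈ chiD G := by
    have e : (chiIota2 G g)⁻¹ * chiIota1 G k * chiIota2 G g * (chiIota1 G k)⁻¹
        = ⁅(chiIota2 G g)⁻¹, chiIota1 G k⁆ := by group
    rw [e]
    have h2 : ⁅(chiIota2 G g)⁻¹, chiIota1 G k⁆ ∈ ⁅chiG2 G, chiG1 G⁆ :=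
      Subgroup.commutator_mem_commutator (inv_mem (mem_chiG2 G g)) (mem_chiG1 G k)
    rw [Subgroup.commutator_comm] at h2
    exact h2
  have h1 : ⁅chiIota1 G k * p * (chiIota1 G k)⁻¹,
      (chiIota2 G g)⁻¹ * chiIota1 G k * chiIota2 G g * (chiIota1 G k)⁻¹⁆ = 1 :=
    (hc _ hp' _ hδ).commutator_eq
  have e : chiIota1 G k * ⁅p, chiIota2 G g⁆ * (chiIota1 G k)⁻¹
      = ⁅chiIota1 G k * p * (chiIota1 G k)⁻¹, chiIota2 G g⁆ *
        (chiIota2 G g * ⁅chiIota1 G k * p * (chiIota1 G k)⁻¹,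
          (chiIota2 G g)⁻¹ * chiIota1 G k * chiIota2 G g * (chiIota1 G k)⁻¹⁆ *
          (chiIota2 G g)⁻¹) := by group
  rw [e, h1, mul_one, mul_inv_cancel, mul_one]
  exact Subgroup.commutator_mem_commutator hp' (mem_chiG2 G g)

theorem stepL (X : Subgroup (Chi G)) (hn : X.Normal)
    (hc : ∀ x ∈ X, ∀ l ∈ chiL G, Commute x l) :
    (⁅X, chiG1 G⁆).Normal ∧ ⁅X, chiG1 G⁆ ≤ X := by
  refine ⟨?_, commSub_le G X hn _⟩
  have key : ∀ x ∈ X, ∀ g : G, ⁅x, chiIota1 G g⁆ = ⁅x, chiIota2 G g⁆ := by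
    intro x hx g
    have h1 : ⁅x, (chiIota1 G g)⁻¹ * chiIota2 G g⁆ = 1 :=
      (hc x hx _ (mem_chiL G g)).commutator_eq
    have e : ⁅x, chiIota2 G g⁆ = ⁅x, chiIota1 G g⁆ *
        (chiIota1 G g * ⁅x, (chiIota1 G g)⁻¹ * chiIota2 G g⁆ * (chiIota1 G g)⁻¹) := by group
    rw [e, h1, mul_one, mul_inv_cancel, mul_one]
  have heq : ⁅X, chiG1 G⁆ = ⁅X, chiG2 G⁆ := by
    apply le_antisymm
    · refine Subgroup.commutator_le.mpr fun p hp q hq => ?_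
      obtain ⟨g, rfl⟩ := hq
      rw [key p hp g]
      exact Subgroup.commutator_mem_commutator hp (mem_chiG2 G g)
    · refine Subgroup.commutator_le.mpr fun p hp q hq => ?_
      obtain ⟨g, rfl⟩ := hq
      rw [← key p hp g]
      exact Subgroup.commutator_mem_commutator hp (mem_chiG1 G g)
  apply normal_of_conj _ _ (conjA_comm1 G X hn)
  intro k x hx
  rw [heq] at hx ⊢
  exact conjB_comm2 G X hn k x hx

theorem Dchain (n : ℕ) :
    (iterComm (chiD G) (chiG1 G) n).Normal ∧ iterComm (chiD G) (chiG1 G) n ≤ chiD G := by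
  induction n with
  | zero => exact ⟨chiD_normal G, le_rfl⟩
  | succ n ih =>
      have hs := stepL G (iterComm (chiD G) (chiG1 G) n) ih.1
        (fun x hx l hl => dl_commute G x (ih.2 hx) l hl)
      exact ⟨hs.1, hs.2.trans ih.2⟩

theorem L1chain (n : ℕ) :
    (iterComm (chiL1 G) (chiG1 G) n).Normal ∧ iterComm (chiL1 G) (chiG1 G) n ≤ chiL G := by
  have hcL : ∀ x ∈ chiL G, ∀ d ∈ chiD G, Commute x d :=
    fun x hx d hd => (dl_commute G d hd x hx).symm
  induction n with
  | zero =>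
      have hs := step1 G (chiL G) (chiL_normal G) hcL
      exact ⟨hs.1, hs.2⟩
  | succ n ih =>
      have hs := step1 G (iterComm (chiL1 G) (chiG1 G) n) ih.1
        (fun x hx d hd => hcL x (ih.2 hx) d hd)
      exact ⟨hs.1, hs.2.trans ih.2⟩

theorem L2chain (n : ℕ) :
    (iterComm (chiL2 G) (chiG2 G) n).Normal ∧ iterComm (chiL2 G) (chiG2 G) n ≤ chiL G := by
  have hcL : ∀ x ∈ chiL G, ∀ d ∈ chiD G, Commute x d :=
    fun x hx d hd => (dl_commute G d hd x hx).symm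
  induction n with
  | zero =>
      have hs := step2 G (chiL G) (chiL_normal G) hcL
      exact ⟨hs.1, hs.2⟩
  | succ n ih =>
      have hs := step2 G (iterComm (chiL2 G) (chiG2 G) n) ih.1
        (fun x hx d hd => hcL x (ih.2 hx) d hd)
      exact ⟨hs.1, hs.2.trans ih.2⟩

end Steps

theorem iterComm_normal (G : Type*) [Group G] (n : ℕ) (hn : 1 ≤ n) :
    (iterComm (chiD G) (chiG1 G) n).Normal ∧
    (iterComm (chiL1 G) (chiG1 G) n).Normal ∧
    (iterComm (chiL2 G) (chiG2 G) n).Normal := by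
  exact ⟨(Dchain G n).1, (L1chain G n).1, (L2chain G n).1⟩
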